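/- arXiv:1109.5036 — 4 statements merged into one kernel-verified Lean document; each statement's English description precedes it below -/
import Mathlib

section
/- If every subgraph of a finite graph G has a vertex of degree at most k, then G has an orientation in which every vertex has in-degree at most k. -/
private lemma aux_stmt1 {V : Type*} [Fintype V] (G : SimpleGraph V) (k : ℕ)
    (h : ∀ H : G.Subgraph, H.verts.Nonempty → ∃ v ∈ H.verts, (H.neighborSet v).ncard ≤ k) :
    ∀ n (H : G.Subgraph), H.verts.ncard ≤ n →
      ∃ D : V → V → Prop,
        (∀ u v, D u v → H.Adj u v) ∧
        (∀ u v, H.Adj u v → (D u v ↔ ¬ D v u)) ∧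
        (∀ v, {u | D u v}.ncard ≤ k) := by
  intro n
  induction n with
  | zero =>
    intro H hH
    have hempty : H.verts = ∅ := by
      have := Set.ncard_eq_zero (Set.toFinite H.verts) |>.mp (Nat.le_zero.mp hH)
      exact this
    refine ⟨fun _ _ => False, by simp, ?_, ?_⟩
    · intro u v huv
      exact absurd (H.edge_vert huv) (by simp [hempty])
    · intro v; simp
  | succ n ih =>
    intro H hH
    by_cases hne : H.verts.Nonempty
    · obtain ⟨v, hv, hdeg⟩ := h H hne
      set H' := H.deleteVerts {v} with hH'
      have hverts : H'.verts = H.verts \ {v} := rfl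
      have hcard : H'.verts.ncard ≤ n := by
        have hlt : (H.verts \ {v}).ncard < H.verts.ncard :=
          Set.ncard_diff_singleton_lt_of_mem hv (Set.toFinite _)
        rw [hverts]
        omega
      obtain ⟨D', hD1, hD2, hD3⟩ := ih H' hcard
      have hne' : ∀ u w, D' u w → u ≠ v ∧ w ≠ v := by
        intro u w huw
        have := hD1 u w huw
        rw [SimpleGraph.Subgraph.deleteVerts_adj] at this
        exact ⟨by simpa using this.2.1, by simpa using this.2.2.2.1⟩
      refine ⟨fun u w => D' u w ∨ (H.Adj u w ∧ w = v), ?_, ?_, ?_⟩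
      · intro u w huw
        rcases huw with huw | ⟨huw, _⟩
        · exact (H.deleteVerts_le).2 (hD1 u w huw)
        · exact huw
      · intro u w haw
        by_cases hw : w = v
        · have hDuw : D' u w ∨ (H.Adj u w ∧ w = v) := Or.inr ⟨haw, hw⟩
          have hnot : ¬ (D' w u ∨ (H.Adj w u ∧ u = v)) := by
            rintro (hD | ⟨_, huv⟩)
            · exact (hne' w u hD).1 hw
            · exact haw.ne (huv.trans hw.symm)
          exact iff_of_true hDuw hnot
        · by_cases hu : u = v
          · have hnot : ¬ (D' u w ∨ (H.Adj u w ∧ w = v)) := by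
              rintro (hD | ⟨_, hwv⟩)
              · exact (hne' u w hD).1 hu
              · exact hw hwv
            have hDwu : D' w u ∨ (H.Adj w u ∧ u = v) := Or.inr ⟨haw.symm, hu⟩
            exact iff_of_false hnot (not_not_intro hDwu)
          · have haw' : H'.Adj u w := by
              rw [SimpleGraph.Subgraph.deleteVerts_adj]
              exact ⟨H.edge_vert haw, by simpa using hu, H.edge_vert haw.symm,
                by simpa using hw, haw⟩
            have := hD2 u w haw'
            simp only [hw, hu, and_false, or_false]
            exact this
      · intro w
        by_cases hw : w = v
        · subst hw
          have hsub : {u | D' u w ∨ (H.Adj u w ∧ w = w)} ⊆ H.neighborSet w := by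
            intro u hu
            rcases hu with hD | ⟨haw, _⟩
            · exact absurd rfl (hne' u w hD).2
            · exact haw.symm
          calc {u | D' u w ∨ (H.Adj u w ∧ w = w)}.ncard
              ≤ (H.neighborSet w).ncard := Set.ncard_le_ncard hsub (Set.toFinite _)
            _ ≤ k := hdeg
        · have : {u | D' u w ∨ (H.Adj u w ∧ w = v)} = {u | D' u w} := by
            ext u; simp [hw]
          rw [this]
          exact hD3 w
    · refine ⟨fun _ _ => False, by simp, ?_, ?_⟩
      · intro u w huw
        exact absurd (Set.nonempty_of_mem (H.edge_vert huw)) hne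
      · intro w; simp

/-- If every (nonempty) subgraph of a finite graph `G` has a vertex of degree at
most `k`, then `G` has an orientation `D` in which every vertex has in-degree at
most `k`. -/
theorem stmt1 {V : Type*} [Fintype V] (G : SimpleGraph V) (k : ℕ)
    (h : ∀ H : G.Subgraph, H.verts.Nonempty → ∃ v ∈ H.verts, (H.neighborSet v).ncard ≤ k) :
    ∃ D : V → V → Prop,
      (∀ u v, D u v → G.Adj u v) ∧
      (∀ u v, G.Adj u v → (D u v ↔ ¬ D v u)) ∧
      (∀ v, {u | D u v}.ncard ≤ k) := by
  obtain ⟨D, h1, h2, h3⟩ := aux_stmt1 G k h ((⊤ : G.Subgraph).verts.ncard) ⊤ le_rfl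
  exact ⟨D, fun u v hD => h1 u v hD, fun u v ha => h2 u v ha, h3⟩
end

section
/- If G is a d-degenerate finite graph on n vertices, then for every integer t ≥ 1, the number of complete subgraphs of G on t vertices is at most C(d, t−1)·n. -/
open Finset

/-- A `d`-degenerate finite graph on `n` vertices has at most `C(d, t-1) * n`
complete subgraphs on `t` vertices (for `t ≥ 1`). -/
theorem stmt3 {V : Type*} [Fintype V] [DecidableEq V] (G : SimpleGraph V) [DecidableRel G.Adj]
    (d t : ℕ) (ht : 1 ≤ t)
    (h : ∀ H : G.Subgraph, H.verts.Nonempty → ∃ v ∈ H.verts, (H.neighborSet v).ncard ≤ d) :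
    (G.cliqueFinset t).card ≤ d.choose (t - 1) * Fintype.card V := by
  have key : ∀ s : Finset V,
      ((G.cliqueFinset t).filter (fun c => c ⊆ s)).card ≤ d.choose (t - 1) * s.card := by
    intro s
    induction s using Finset.strongInduction with
    | _ s ih =>
      rcases s.eq_empty_or_nonempty with rfl | hs
      · have : (G.cliqueFinset t).filter (fun c => c ⊆ (∅ : Finset V)) = ∅ := by
          ext c
          simp only [mem_filter, Finset.subset_empty, SimpleGraph.mem_cliqueFinset_iff,
            Finset.notMem_empty, iff_false]
          rintro ⟨hc, rfl⟩
          simp [SimpleGraph.isNClique_iff] at hc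
          omega
        rw [this]; simp
      · -- build the induced subgraph on s
        set H : G.Subgraph :=
          { verts := ↑s
            Adj := fun a b => G.Adj a b ∧ a ∈ s ∧ b ∈ s
            adj_sub := fun h => h.1
            edge_vert := fun h => h.2.1
            symm := ⟨fun a b h => ⟨h.1.symm, h.2.2, h.2.1⟩⟩ } with hH
        obtain ⟨v, hv, hdeg⟩ := h H (by simpa [hH] using hs)
        have hv' : v ∈ s := by simpa [hH] using hv
        set N : Finset V := s.filter (fun w => G.Adj v w) with hN
        have hNcard : N.card ≤ d := by
          have : H.neighborSet v = ↑N := by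
            ext w
            simp [hH, hN, SimpleGraph.Subgraph.neighborSet, hv', and_comm]
          rw [this, Set.ncard_coe_finset] at hdeg
          exact hdeg
        -- split cliques into those containing v and those not
        have hsplit : (G.cliqueFinset t).filter (fun c => c ⊆ s) ⊆
            ((G.cliqueFinset t).filter (fun c => c ⊆ s ∧ v ∈ c)) ∪
            ((G.cliqueFinset t).filter (fun c => c ⊆ s.erase v)) := by
          intro c hc
          simp only [mem_filter, mem_union] at hc ⊢
          by_cases hvc : v ∈ c
          · exact Or.inl ⟨hc.1, hc.2, hvc⟩
          · exact Or.inr ⟨hc.1, fun x hx => Finset.mem_erase.2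
              ⟨fun hxv => hvc (hxv ▸ hx), hc.2 hx⟩⟩
        have h1 : ((G.cliqueFinset t).filter (fun c => c ⊆ s ∧ v ∈ c)).card ≤
            d.choose (t - 1) := by
          have hinj : ((G.cliqueFinset t).filter (fun c => c ⊆ s ∧ v ∈ c)).card ≤
              (N.powersetCard (t - 1)).card := by
            apply Finset.card_le_card_of_injOn (fun c => c.erase v)
            · intro c hc
              simp only [Finset.mem_coe, mem_filter, SimpleGraph.mem_cliqueFinset_iff] at hc
              obtain ⟨hclique, hcs, hvc⟩ := hc
              rw [Finset.mem_coe, Finset.mem_powersetCard]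
              constructor
              · intro w hw
                rw [Finset.mem_erase] at hw
                rw [hN, mem_filter]
                exact ⟨hcs hw.2, hclique.1 hvc hw.2 (Ne.symm hw.1)⟩
              · rw [Finset.card_erase_of_mem hvc, hclique.2]
            · intro c1 hc1 c2 hc2 he
              simp only [coe_filter, Set.mem_setOf_eq] at hc1 hc2
              have := congrArg (insert v) he
              rwa [Finset.insert_erase hc1.2.2, Finset.insert_erase hc2.2.2] at this
          calc _ ≤ (N.powersetCard (t - 1)).card := hinj
            _ = N.card.choose (t - 1) := by rw [Finset.card_powersetCard]
            _ ≤ d.choose (t - 1) := Nat.choose_le_choose _ hNcard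
        have h2 : ((G.cliqueFinset t).filter (fun c => c ⊆ s.erase v)).card ≤
            d.choose (t - 1) * (s.erase v).card :=
          ih (s.erase v) (Finset.erase_ssubset hv')
        have hcard : (s.erase v).card = s.card - 1 := Finset.card_erase_of_mem hv'
        have hs1 : 1 ≤ s.card := Finset.card_pos.2 hs
        calc ((G.cliqueFinset t).filter (fun c => c ⊆ s)).card
            ≤ (((G.cliqueFinset t).filter (fun c => c ⊆ s ∧ v ∈ c)) ∪
              ((G.cliqueFinset t).filter (fun c => c ⊆ s.erase v))).card :=
              Finset.card_le_card hsplit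
          _ ≤ _ + _ := Finset.card_union_le _ _
          _ ≤ d.choose (t - 1) + d.choose (t - 1) * (s.card - 1) := by
              rw [hcard] at h2; omega
          _ ≤ d.choose (t - 1) * s.card := by
              have := Nat.mul_le_mul_left (d.choose (t-1)) hs1
              nlinarith [Nat.sub_add_cancel hs1]
    -- end key
  have := key Finset.univ
  have heq : (G.cliqueFinset t).filter (fun c => c ⊆ Finset.univ) = G.cliqueFinset t := by
    apply Finset.filter_true_of_mem; intros; exact Finset.subset_univ _
  rwa [heq, Finset.card_univ] at this
end

section
/- The tree-depth of a path on n vertices is at least ⌈log₂(n+1)⌉; more precisely, the closure of any rooted forest of depth d has no path on 2^d vertices as a subgraph. -/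
/-- A rooted forest on `V` given by a parent function `p` together with a depth
function `dep`: roots (fixed points of `p`) have depth 1, and every non-root has
depth one more than its parent. -/
def ParentDepth {V : Type*} (p : V → V) (dep : V → ℕ) : Prop :=
  ∀ v, (p v = v → dep v = 1) ∧ (p v ≠ v → dep v = dep (p v) + 1)

/-- The closure of a rooted forest: two distinct vertices are adjacent iff one is
a proper ancestor of the other (joined by a directed path). -/
def forestClosure {V : Type*} (p : V → V) : SimpleGraph V :=
  SimpleGraph.fromRel (fun u v => ∃ k, 0 < k ∧ p^[k] u = v)

/-- `G` has tree-depth at most `s`: `G` is a subgraph of the closure of a rooted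
forest of depth at most `s`. -/
def TreeDepthLE {V : Type*} (G : SimpleGraph V) (s : ℕ) : Prop :=
  ∃ (p : V → V) (dep : V → ℕ), ParentDepth p dep ∧ (∀ v, dep v ≤ s) ∧ G ≤ forestClosure p

/-- `A` is contained in `B` as a subgraph. -/
def Contains {α β : Type*} (A : SimpleGraph α) (B : SimpleGraph β) : Prop :=
  ∃ f : α → β, Function.Injective f ∧ ∀ a b, A.Adj a b → B.Adj (f a) (f b)

namespace TD7

variable {V : Type*} {p : V → V} {dep : V → ℕ}

/-- `v` is an ancestor (or equal) of `u`. -/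
def Desc (p : V → V) (u v : V) : Prop := ∃ k, p^[k] u = v

lemma desc_refl (u : V) : Desc p u u := ⟨0, rfl⟩

lemma desc_trans {u v w : V} (h1 : Desc p u v) (h2 : Desc p v w) : Desc p u w := by
  obtain ⟨j, rfl⟩ := h1; obtain ⟨k, rfl⟩ := h2
  exact ⟨k + j, Function.iterate_add_apply p k j u⟩

lemma dep_pos (h : ParentDepth p dep) (v : V) : 1 ≤ dep v := by
  rcases eq_or_ne (p v) v with hv | hv
  · exact ((h v).1 hv).ge
  · rw [(h v).2 hv]; omega

lemma dep_parent_le (h : ParentDepth p dep) (v : V) : dep (p v) ≤ dep v := by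
  rcases eq_or_ne (p v) v with hv | hv
  · rw [hv]
  · rw [(h v).2 hv]; omega

lemma dep_iter_le (h : ParentDepth p dep) (k : ℕ) (v : V) : dep (p^[k] v) ≤ dep v := by
  induction k with
  | zero => exact le_refl _
  | succ k ih => rw [Function.iterate_succ_apply']; exact (dep_parent_le h _).trans ih

lemma dep_desc_le (h : ParentDepth p dep) {u v : V} (hd : Desc p u v) : dep v ≤ dep u := by
  obtain ⟨k, rfl⟩ := hd; exact dep_iter_le h k u

lemma eq_of_iter_eq_of_dep_le (h : ParentDepth p dep) :
    ∀ (k : ℕ) (v : V), dep v ≤ dep (p^[k] v) → p^[k] v = v := by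
  intro k
  induction k with
  | zero => intro v _; rfl
  | succ k ih =>
    intro v hv
    rcases eq_or_ne (p v) v with h1 | h1
    · rw [Function.iterate_succ_apply, h1] at hv ⊢; exact ih v hv
    · exfalso
      have h2 := (h v).2 h1
      have h3 : dep (p^[k + 1] v) ≤ dep (p v) := by
        rw [Function.iterate_succ_apply]; exact dep_iter_le h k (p v)
      omega

lemma desc_eq_of_dep_le (h : ParentDepth p dep) {u v : V} (h1 : Desc p u v)
    (h2 : dep u ≤ dep v) : u = v := by
  obtain ⟨k, rfl⟩ := h1
  exact (eq_of_iter_eq_of_dep_le h k u h2).symm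

/-- If `x` descends from `r`, `y` is comparable with `x`, and `dep r ≤ dep y`,
then `y` descends from `r`. -/
lemma desc_step (h : ParentDepth p dep) {x y r : V} (hx : Desc p x r)
    (hc : Desc p x y ∨ Desc p y x) (hd : dep r ≤ dep y) : Desc p y r := by
  rcases hc with hc | hc
  · obtain ⟨j, rfl⟩ := hc
    obtain ⟨m, hm⟩ := hx
    rcases le_or_gt j m with hjm | hjm
    · exact ⟨m - j, by rw [← Function.iterate_add_apply, Nat.sub_add_cancel hjm]; exact hm⟩
    · have h2 : Desc p r (p^[j] x) :=
        ⟨j - m, by rw [← hm, ← Function.iterate_add_apply, Nat.sub_add_cancel hjm.le]⟩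
      have h3 : r = p^[j] x := desc_eq_of_dep_le h h2 hd
      exact ⟨0, h3.symm⟩
  · exact desc_trans hc hx

lemma exists_child {r : V} :
    ∀ (k : ℕ) (u : V), p^[k] u = r → u ≠ r → ∃ c, Desc p u c ∧ p c = r ∧ c ≠ r := by
  intro k
  induction k with
  | zero => intro u hk hne; exact absurd hk hne
  | succ k ih =>
    intro u hk hne
    rcases eq_or_ne (p u) r with h1 | h1
    · exact ⟨u, desc_refl u, h1, hne⟩
    · obtain ⟨c, hc1, hc2, hc3⟩ := ih (p u) (by rwa [Function.iterate_succ_apply] at hk) h1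
      exact ⟨c, desc_trans ⟨1, rfl⟩ hc1, hc2, hc3⟩

lemma child_unique_aux (h : ParentDepth p dep) {u r c c' : V} {a b : ℕ}
    (ha : p^[a] u = c) (hb : p^[b] u = c') (hab : a ≤ b)
    (h2 : p c = r) (h5 : p c' = r) (h6 : c' ≠ r) : c = c' := by
  rcases Nat.eq_or_lt_of_le hab with he | hl
  · rw [← ha, ← hb, he]
  · exfalso
    have e1 : p^[b - a] c = c' := by
      rw [← ha, ← Function.iterate_add_apply, Nat.sub_add_cancel hab, hb]
    have e2 : p^[b - a] c = p^[b - a - 1] r := by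
      have hba : b - a - 1 + 1 = b - a := by omega
      rw [← h2, ← Function.iterate_succ_apply, Nat.succ_eq_add_one, hba]
    have hdesc : Desc p r c' := ⟨b - a - 1, by rw [← e2, e1]⟩
    have hle1 : dep c' ≤ dep r := dep_desc_le h hdesc
    have hne : p c' ≠ c' := by rw [h5]; exact fun hh => h6 hh.symm
    have := (h c').2 hne
    rw [h5] at this
    omega

lemma child_unique (h : ParentDepth p dep) {u r c c' : V}
    (h1 : Desc p u c) (h2 : p c = r) (h3 : c ≠ r)
    (h4 : Desc p u c') (h5 : p c' = r) (h6 : c' ≠ r) : c = c' := by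
  obtain ⟨a, ha⟩ := h1; obtain ⟨b, hb⟩ := h4
  rcases le_total a b with hab | hab
  · exact child_unique_aux h ha hb hab h2 h5 h6
  · exact (child_unique_aux h hb ha hab h5 h2 h3).symm

lemma adj_closure {u v : V} (h : (forestClosure p).Adj u v) :
    u ≠ v ∧ (Desc p u v ∨ Desc p v u) := by
  rw [forestClosure, SimpleGraph.fromRel_adj] at h
  exact ⟨h.1, h.2.imp (fun ⟨k, _, hk⟩ => ⟨k, hk⟩) (fun ⟨k, _, hk⟩ => ⟨k, hk⟩)⟩

/-- Every vertex descends from a root. -/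
lemma exists_root (h : ParentDepth p dep) (v : V) : ∃ r, Desc p v r ∧ p r = r := by
  have : ∀ (n : ℕ) (v : V), dep v ≤ n → ∃ r, Desc p v r ∧ p r = r := by
    intro n
    induction n with
    | zero => intro v hv; exact absurd (dep_pos h v) (by omega)
    | succ n ih =>
      intro v hv
      rcases eq_or_ne (p v) v with h1 | h1
      · exact ⟨v, desc_refl v, h1⟩
      · obtain ⟨r, hr1, hr2⟩ := ih (p v) (by have := (h v).2 h1; omega)
        exact ⟨r, desc_trans ⟨1, rfl⟩ hr1, hr2⟩
  exact this (dep v) v le_rfl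

lemma root_unique_aux {v a b : V} {j k : ℕ} (hj : p^[j] v = a) (hfa : p a = a)
    (hk : p^[k] v = b) (hjk : j ≤ k) : a = b := by
  rw [← hk, ← Nat.sub_add_cancel hjk, Function.iterate_add_apply, hj,
    Function.iterate_fixed hfa]

lemma root_unique {v a b : V} (ha : Desc p v a) (hfa : p a = a)
    (hb : Desc p v b) (hfb : p b = b) : a = b := by
  obtain ⟨j, hj⟩ := ha; obtain ⟨k, hk⟩ := hb
  rcases le_total j k with hjk | hjk
  · exact root_unique_aux hj hfa hk hjk
  · exact (root_unique_aux hk hfb hj hjk).symm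

/-- Common-child lemma: a path of proper descendants of `m` all lie below a
single child of `m`. -/
lemma common_child (h : ParentDepth p dep) (m : V) (f : ℕ → V) :
    ∀ t : ℕ, 0 < t →
      (∀ i, i < t → Desc p (f i) m ∧ f i ≠ m) →
      (∀ i, i + 1 < t → Desc p (f i) (f (i + 1)) ∨ Desc p (f (i + 1)) (f i)) →
      ∃ c, p c = m ∧ c ≠ m ∧ ∀ i, i < t → Desc p (f i) c := by
  intro t
  induction t with
  | zero => intro h0; exact absurd h0 (lt_irrefl 0)
  | succ t ih =>
    intro _ hdesc hadj
    rcases Nat.eq_zero_or_pos t with rfl | ht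
    · obtain ⟨hd0, hn0⟩ := hdesc 0 (by omega)
      obtain ⟨k, hk⟩ := hd0
      obtain ⟨c, hc1, hc2, hc3⟩ := exists_child k (f 0) hk hn0
      refine ⟨c, hc2, hc3, fun i hi => ?_⟩
      have : i = 0 := by omega
      subst this; exact hc1
    · obtain ⟨c, hc1, hc2, hc3⟩ :=
        ih ht (fun i hi => hdesc i (by omega)) (fun i hi => hadj i (by omega))
      have e : t - 1 + 1 = t := by omega
      have hco := hadj (t - 1) (by omega)
      rw [e] at hco
      rcases hco with hco | hco
      · -- Desc (f (t-1)) (f t) : get child of f t, identify with c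
        obtain ⟨hdt, hnt⟩ := hdesc t (by omega)
        obtain ⟨k, hk⟩ := hdt
        obtain ⟨c', hc'1, hc'2, hc'3⟩ := exists_child k (f t) hk hnt
        have hdc' : Desc p (f (t - 1)) c' := desc_trans hco hc'1
        have hdc : Desc p (f (t - 1)) c := hc3 (t - 1) (by omega)
        have hcc : c = c' := child_unique h hdc hc1 hc2 hdc' hc'2 hc'3
        refine ⟨c, hc1, hc2, fun i hi => ?_⟩
        rcases Nat.lt_or_ge i t with hit | hit
        · exact hc3 i hit
        · have : i = t := by omega
          subst this; rw [hcc]; exact hc'1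
      · -- Desc (f t) (f (t-1))
        have hdt : Desc p (f t) c := desc_trans hco (hc3 (t - 1) (by omega))
        refine ⟨c, hc1, hc2, fun i hi => ?_⟩
        rcases Nat.lt_or_ge i t with hit | hit
        · exact hc3 i hit
        · have : i = t := by omega
          subst this; exact hdt

/-- Main lemma: a path in the closure whose vertices all descend from `r` and lie
within `k` levels below `r` has fewer than `2 ^ k` vertices. -/
lemma main (h : ParentDepth p dep) :
    ∀ (k n : ℕ) (f : ℕ → V) (r : V),
      (∀ i j, i < n → j < n → f i = f j → i = j) →
      (∀ i, i + 1 < n → (forestClosure p).Adj (f i) (f (i + 1))) →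
      (∀ i, i < n → Desc p (f i) r) →
      (∀ i, i < n → dep (f i) < dep r + k) →
      n < 2 ^ k := by
  intro k
  induction k with
  | zero =>
    intro n f r _ _ hdesc hdep
    by_contra hn
    push_neg at hn
    have h0 : (0 : ℕ) < n := by simp at hn; omega
    have h1 := dep_desc_le h (hdesc 0 h0)
    have h2 := hdep 0 h0
    omega
  | succ k ih =>
    intro n f r hinj hadj hdesc hdep
    rcases Nat.eq_zero_or_pos n with rfl | hn
    · positivity
    obtain ⟨t, htmem, htmin⟩ := Finset.exists_min_image (Finset.range n)
      (fun i => dep (f i)) ⟨0, Finset.mem_range.2 hn⟩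
    rw [Finset.mem_range] at htmem
    have htmin' : ∀ i, i < n → dep (f t) ≤ dep (f i) := fun i hi =>
      htmin i (Finset.mem_range.2 hi)
    set m := f t with hm
    -- every vertex of the path descends from m
    have hdm : ∀ i, i < n → Desc p (f i) m := by
      have down : ∀ j, j ≤ t → Desc p (f (t - j)) m := by
        intro j
        induction j with
        | zero => intro _; exact desc_refl m
        | succ j ihj =>
          intro hj
          have h1 := ihj (by omega)
          have ha : (t - (j + 1)) + 1 = t - j := by omega
          have hadj' := hadj (t - (j + 1)) (by omega)
          rw [ha] at hadj'
          obtain ⟨_, hcomp⟩ := adj_closure hadj'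
          exact desc_step h h1 hcomp.symm (htmin' _ (by omega))
      have up : ∀ j, t + j < n → Desc p (f (t + j)) m := by
        intro j
        induction j with
        | zero => intro _; exact desc_refl m
        | succ j ihj =>
          intro hj
          have h1 := ihj (by omega)
          have hadj' := hadj (t + j) (by omega)
          obtain ⟨_, hcomp⟩ := adj_closure hadj'
          exact desc_step h h1 hcomp (htmin' _ hj)
      intro i hi
      rcases le_or_gt i t with hit | hit
      · have := down (t - i) (by omega)
        rwa [Nat.sub_sub_self hit] at this
      · have := up (i - t) (by omega)
        rwa [Nat.add_sub_cancel' hit.le] at this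
    have hdepr : dep r ≤ dep m := dep_desc_le h (hdesc t htmem)
    -- left half
    have hleft : t < 2 ^ k := by
      rcases Nat.eq_zero_or_pos t with rfl | ht0
      · positivity
      obtain ⟨c, hcm, hcne, hcall⟩ := common_child h m f t ht0
        (fun i hi => ⟨hdm i (by omega), fun he => by
          have := hinj i t (by omega) htmem he; omega⟩)
        (fun i hi => (adj_closure (hadj i (by omega))).2)
      have hdc : dep c = dep m + 1 := by
        have hne : p c ≠ c := by rw [hcm]; exact fun hh => hcne hh.symm
        have := (h c).2 hne
        rw [hcm] at this; exact this
      exact ih t f c (fun i j hi hj => hinj i j (by omega) (by omega))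
        (fun i hi => hadj i (by omega)) (fun i hi => hcall i hi)
        (fun i hi => by have := hdep i (by omega); omega)
    -- right half
    have hright : n - t - 1 < 2 ^ k := by
      rcases Nat.eq_zero_or_pos (n - t - 1) with h0 | hs0
      · rw [h0]; positivity
      set g : ℕ → V := fun i => f (t + 1 + i) with hg
      obtain ⟨c, hcm, hcne, hcall⟩ := common_child h m g (n - t - 1) hs0
        (fun i hi => ⟨hdm _ (by omega), fun he => by
          have := hinj (t + 1 + i) t (by omega) htmem he; omega⟩)
        (fun i hi => (adj_closure (hadj (t + 1 + i) (by omega))).2)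
      have hdc : dep c = dep m + 1 := by
        have hne : p c ≠ c := by rw [hcm]; exact fun hh => hcne hh.symm
        have := (h c).2 hne
        rw [hcm] at this; exact this
      exact ih (n - t - 1) g c
        (fun i j hi hj he => by have := hinj (t + 1 + i) (t + 1 + j) (by omega) (by omega) he; omega)
        (fun i hi => hadj (t + 1 + i) (by omega)) (fun i hi => hcall i hi)
        (fun i hi => by
          have := hdep (t + 1 + i) (by omega)
          simp only [hg]
          omega)
    have hpow : 2 ^ (k + 1) = 2 ^ k * 2 := pow_succ 2 k
    omega

/-- Part 1 of the theorem. -/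
theorem part1 (d : ℕ) (V : Type) (p : V → V) (dep : V → ℕ) (h : ParentDepth p dep)
    (hd : ∀ v, dep v ≤ d) : ¬ Contains (SimpleGraph.pathGraph (2 ^ d)) (forestClosure p) := by
  rintro ⟨f, hinj, hmap⟩
  have hpos : 0 < 2 ^ d := by positivity
  set g : ℕ → V := fun i => if hi : i < 2 ^ d then f ⟨i, hi⟩ else f ⟨0, hpos⟩ with hg
  have hgval : ∀ i (hi : i < 2 ^ d), g i = f ⟨i, hi⟩ := fun i hi => dif_pos hi
  have hginj : ∀ i j, i < 2 ^ d → j < 2 ^ d → g i = g j → i = j := by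
    intro i j hi hj he
    rw [hgval i hi, hgval j hj] at he
    exact congrArg Fin.val (hinj he)
  have hgadj : ∀ i, i + 1 < 2 ^ d → (forestClosure p).Adj (g i) (g (i + 1)) := by
    intro i hi
    rw [hgval i (by omega), hgval (i + 1) hi]
    apply hmap
    rw [SimpleGraph.pathGraph_adj]
    left; rfl
  obtain ⟨r, hr1, hr2⟩ := exists_root h (g 0)
  have hgr : ∀ i, i < 2 ^ d → Desc p (g i) r := by
    intro i
    induction i with
    | zero => intro _; exact hr1
    | succ i ihi =>
      intro hi
      have h1 := ihi (by omega)
      obtain ⟨_, hcomp⟩ := adj_closure (hgadj i hi)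
      rcases hcomp with hc | hc
      · obtain ⟨r', hr'1, hr'2⟩ := exists_root h (g (i + 1))
        have : Desc p (g i) r' := desc_trans hc hr'1
        have hrr : r = r' := root_unique h1 hr2 this hr'2
        rw [hrr]; exact hr'1
      · exact desc_trans hc h1
  have hdr : dep r = 1 := (h r).1 hr2
  have := main h d (2 ^ d) g r hginj hgadj hgr
    (fun i hi => by have := hd (g i); omega)
  omega

end TD7

/-- The closure of any rooted forest of depth `d` has no path on `2^d` vertices
as a subgraph; hence the tree-depth of a path on `n` vertices is at least
`⌈log₂ (n+1)⌉`. -/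
theorem stmt7 (d : ℕ) :
    (∀ (V : Type) (p : V → V) (dep : V → ℕ), ParentDepth p dep → (∀ v, dep v ≤ d) →
      ¬ Contains (SimpleGraph.pathGraph (2 ^ d)) (forestClosure p)) ∧
    (∀ n : ℕ, TreeDepthLE (SimpleGraph.pathGraph n) d → Nat.clog 2 (n + 1) ≤ d) := by
  constructor
  · exact fun V p dep h hd => TD7.part1 d V p dep h hd
  · intro n hTD
    obtain ⟨p, dep, hpd, hdep, hle⟩ := hTD
    by_contra hc
    rw [Nat.clog_le_iff_le_pow (by norm_num)] at hc
    push_neg at hc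
    have hpn : 2 ^ d ≤ n := by omega
    apply TD7.part1 d (Fin n) p dep hpd hdep
    refine ⟨fun i => Fin.castLE hpn i, Fin.castLE_injective _, ?_⟩
    intro a b hab
    apply hle
    rw [SimpleGraph.pathGraph_adj] at hab ⊢
    simpa using hab
end

section
/- Let r ≥ 1 and let G be any finite graph. Testing whether G contains a complete subgraph on m vertices is equivalent to testing whether the r-subdivision of G contains a subgraph isomorphic to the r-subdivision of K_m: G contains K_m as a subgraph if and only if the r-subdivision of G contains the r-subdivision of K_m as a subgraph. -/
/-- The `r`-subdivision of `G`: every edge `{a, b}` (with `a < b`) is replaced by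
a path through `r` new internal vertices `(a, b, 0), …, (a, b, r-1)`. -/
def subdiv {V : Type*} [LinearOrder V] (r : ℕ) (G : SimpleGraph V) :
    SimpleGraph (V ⊕ (V × V × Fin r)) :=
  SimpleGraph.fromRel (fun x y =>
    match x, y with
    | Sum.inl u, Sum.inr (a, b, i) =>
        G.Adj a b ∧ a < b ∧ ((u = a ∧ (i : ℕ) = 0) ∨ (u = b ∧ (i : ℕ) = r - 1))
    | Sum.inr (a, b, i), Sum.inr (a', b', j) =>
        a = a' ∧ b = b' ∧ G.Adj a b ∧ a < b ∧ (j : ℕ) = (i : ℕ) + 1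
    | _, _ => False)

set_option linter.unreachableTactic false
set_option linter.unusedTactic false
open Sum

section Lemmas
variable {V : Type*} [LinearOrder V] {G : SimpleGraph V} {r : ℕ}

lemma subdiv_adj_inl_inl {u v : V} : ¬ (subdiv r G).Adj (inl u) (inl v) := by
  simp [subdiv]

lemma subdiv_adj_inl_inr {u x y : V} {i : Fin r} :
    (subdiv r G).Adj (inl u) (inr (x, y, i)) ↔
      G.Adj x y ∧ x < y ∧ ((u = x ∧ (i : ℕ) = 0) ∨ (u = y ∧ (i : ℕ) = r - 1)) := by
  simp [subdiv]

lemma subdiv_adj_inr_inr {x y x' y' : V} {i j : Fin r} :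
    (subdiv r G).Adj (inr (x, y, i)) (inr (x', y', j)) ↔
      x = x' ∧ y = y' ∧ G.Adj x y ∧ x < y ∧ ((j : ℕ) = i + 1 ∨ (i : ℕ) = j + 1) := by
  simp only [subdiv, SimpleGraph.fromRel_adj]
  constructor
  · rintro ⟨hne, ⟨h1, h2, h3, h4, h5⟩ | ⟨h1, h2, h3, h4, h5⟩⟩
    · exact ⟨h1, h2, h3, h4, Or.inl h5⟩
    · exact ⟨h1.symm, h2.symm, h1 ▸ h2 ▸ h3, h1 ▸ h2 ▸ h4, Or.inr h5⟩
  · rintro ⟨rfl, rfl, h3, h4, h5 | h5⟩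
    · refine ⟨?_, Or.inl ⟨rfl, rfl, h3, h4, h5⟩⟩
      simp only [ne_eq, inr.injEq, Prod.mk.injEq, true_and]
      intro h; exact absurd (congrArg Fin.val h) (by omega)
    · refine ⟨?_, Or.inr ⟨rfl, rfl, h3, h4, h5⟩⟩
      simp only [ne_eq, inr.injEq, Prod.mk.injEq, true_and]
      intro h; exact absurd (congrArg Fin.val h) (by omega)

lemma subdiv_adj_inr {z} {x y : V} {k : Fin r}
    (h : (subdiv r G).Adj z (inr (x, y, k))) :
    (z = inl x ∧ (k : ℕ) = 0) ∨ (z = inl y ∧ (k : ℕ) = r - 1) ∨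
      (∃ k' : Fin r, z = inr (x, y, k') ∧ ((k' : ℕ) = k + 1 ∨ (k : ℕ) = k' + 1)) := by
  match z with
  | inl u =>
    rw [subdiv_adj_inl_inr] at h
    obtain ⟨_, _, ⟨rfl, h0⟩ | ⟨rfl, h0⟩⟩ := h
    · exact Or.inl ⟨rfl, h0⟩
    · exact Or.inr (Or.inl ⟨rfl, h0⟩)
  | inr (a, b, i) =>
    rw [subdiv_adj_inr_inr] at h
    obtain ⟨rfl, rfl, _, _, h5⟩ := h
    exact Or.inr (Or.inr ⟨i, rfl, by omega⟩)

lemma subdiv_edge {z z' : V ⊕ (V × V × Fin r)} (h : (subdiv r G).Adj z z') :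
    ∃ x y, G.Adj x y := by
  match z, z' with
  | inl u, inl v => exact absurd h subdiv_adj_inl_inl
  | inl u, inr (x, y, i) => exact ⟨x, y, (subdiv_adj_inl_inr.mp h).1⟩
  | inr (x, y, i), inl u => exact ⟨x, y, (subdiv_adj_inl_inr.mp h.symm).1⟩
  | inr (x, y, i), inr (x', y', j) => exact ⟨x, y, (subdiv_adj_inr_inr.mp h).2.2.1⟩

lemma unwind (hr : 1 ≤ r) {w : ℕ → V ⊕ (V × V × Fin r)}
    (hadj : ∀ i < r + 1, (subdiv r G).Adj (w i) (w (i + 1)))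
    (hinj : ∀ i ≤ r + 1, ∀ j ≤ r + 1, w i = w j → i = j)
    {u : V} (h0 : w 0 = inl u) :
    ∃ u', w (r + 1) = inl u' ∧ G.Adj u u' := by
  have h01 := hadj 0 (by omega)
  rw [h0] at h01
  obtain ⟨x, y, c, hw1⟩ : ∃ x y c, w 1 = inr (x, y, c) := by
    match hw : w 1 with
    | inl v => rw [hw] at h01; exact absurd h01 subdiv_adj_inl_inl
    | inr (x, y, c) => exact ⟨x, y, c, rfl⟩
  rw [hw1, subdiv_adj_inl_inr] at h01
  obtain ⟨hxy, hlt, hc⟩ := h01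
  have hne : x ≠ y := hlt.ne
  have key : ∀ i, 1 ≤ i → i ≤ r → ∃ k : Fin r, w i = inr (x, y, k) ∧
      ((u = x ∧ (k : ℕ) + 1 = i) ∨ (u = y ∧ (k : ℕ) + i = r)) := by
    intro i
    induction i using Nat.strong_induction_on with
    | _ n ih =>
      intro h1 h2
      rcases Nat.lt_or_ge n 2 with hn | hn
      · -- n = 1
        have : n = 1 := by omega
        subst this
        refine ⟨c, hw1, ?_⟩
        rcases hc with ⟨rfl, h⟩ | ⟨rfl, h⟩
        · exact Or.inl ⟨rfl, by omega⟩
        · exact Or.inr ⟨rfl, by omega⟩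
      · -- n ≥ 2
        obtain ⟨k, hk, hcase⟩ := ih (n - 1) (by omega) (by omega) (by omega)
        have hadj' := (hadj (n - 1) (by omega)).symm
        have hn1 : n - 1 + 1 = n := by omega
        rw [hn1, hk] at hadj'
        have hkk := k.isLt
        rcases subdiv_adj_inr hadj' with ⟨hw, hk0⟩ | ⟨hw, hk0⟩ | ⟨k', hw, hk0⟩
        · -- w n = inl x, k = 0
          rcases hcase with ⟨rfl, hv⟩ | ⟨rfl, hv⟩
          · -- u = x, k + 1 = n - 1 : then n - 1 = 1, n = 2, w 2 = inl u = w 0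
            have : n = 2 := by omega
            subst this
            rw [← h0] at hw
            exact absurd (hinj 2 (by omega) 0 (by omega) hw) (by omega)
          · -- u = y, k + (n-1) = r : n - 1 = r, n = r + 1 > r, contra
            omega
        · -- w n = inl y, k = r - 1
          rcases hcase with ⟨rfl, hv⟩ | ⟨rfl, hv⟩
          · omega
          · have : n = 2 := by omega
            subst this
            rw [← h0] at hw
            exact absurd (hinj 2 (by omega) 0 (by omega) hw) (by omega)
        · have hkk' := k'.isLt
          rcases hcase with ⟨rfl, hv⟩ | ⟨rfl, hv⟩
          · -- u = x, (k:ℕ) + 1 = n - 1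
            rcases hk0 with hk0 | hk0
            · exact ⟨k', hw, Or.inl ⟨rfl, by omega⟩⟩
            · -- back-step: k = k' + 1, so k' + 1 = n - 2; need n - 2 ≥ 1
              exfalso
              have h3 : 1 ≤ n - 2 := by omega
              obtain ⟨k'', hk'', hcase''⟩ := ih (n - 2) (by omega) h3 (by omega)
              have : k'' = k' := by
                rcases hcase'' with ⟨_, hv''⟩ | ⟨hxy'', _⟩
                · exact Fin.ext (by omega)
                · exact absurd hxy'' hne
              rw [← this] at hw
              rw [← hk''] at hw
              exact absurd (hinj n (by omega) (n - 2) (by omega) hw) (by omega)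
          · -- u = y, (k:ℕ) + (n-1) = r
            rcases hk0 with hk0 | hk0
            · exfalso
              have h3 : 1 ≤ n - 2 := by omega
              obtain ⟨k'', hk'', hcase''⟩ := ih (n - 2) (by omega) h3 (by omega)
              have : k'' = k' := by
                rcases hcase'' with ⟨hxy'', _⟩ | ⟨_, hv''⟩
                · exact absurd hxy''.symm hne
                · exact Fin.ext (by omega)
              rw [← this] at hw
              rw [← hk''] at hw
              exact absurd (hinj n (by omega) (n - 2) (by omega) hw) (by omega)
            · exact ⟨k', hw, Or.inr ⟨rfl, by omega⟩⟩
  obtain ⟨k, hk, hcase⟩ := key r (by omega) le_rfl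
  have hadj' := (hadj r (by omega)).symm
  rw [hk] at hadj'
  have hkk := k.isLt
  rcases subdiv_adj_inr hadj' with ⟨hw, hk0⟩ | ⟨hw, hk0⟩ | ⟨k', hw, hk0⟩
  · -- w (r+1) = inl x, k = 0
    rcases hcase with ⟨rfl, hv⟩ | ⟨rfl, hv⟩
    · -- u = x, k + 1 = r so r = 1, k = 0: w (r+1) = inl u = w 0
      exfalso
      rw [← h0] at hw
      exact absurd (hinj (r + 1) le_rfl 0 (by omega) hw) (by omega)
    · exact ⟨x, hw, hxy.symm⟩
  · rcases hcase with ⟨rfl, hv⟩ | ⟨rfl, hv⟩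
    · exact ⟨y, hw, hxy⟩
    · exfalso
      rw [← h0] at hw
      exact absurd (hinj (r + 1) le_rfl 0 (by omega) hw) (by omega)
  · exfalso
    have hkk' := k'.isLt
    rcases hcase with ⟨rfl, hv⟩ | ⟨rfl, hv⟩
    · -- u = x, k + 1 = r; so k' = k + 1 = r impossible; k = k' + 1 : k' = r - 2
      rcases hk0 with hk0 | hk0
      · omega
      · have h3 : 1 ≤ r - 1 := by omega
        obtain ⟨k'', hk'', hcase''⟩ := key (r - 1) h3 (by omega)
        have : k'' = k' := by
          rcases hcase'' with ⟨_, hv''⟩ | ⟨hxy'', _⟩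
          · exact Fin.ext (by omega)
          · exact absurd hxy'' hne
        rw [← this, ← hk''] at hw
        exact absurd (hinj (r + 1) le_rfl (r - 1) (by omega) hw) (by omega)
    · -- u = y, k + r = r so k = 0; k = k'+1 impossible; k' = 1
      rcases hk0 with hk0 | hk0
      · have h3 : 1 ≤ r - 1 := by omega
        obtain ⟨k'', hk'', hcase''⟩ := key (r - 1) h3 (by omega)
        have : k'' = k' := by
          rcases hcase'' with ⟨hxy'', _⟩ | ⟨_, hv''⟩
          · exact absurd hxy''.symm hne
          · exact Fin.ext (by omega)
        rw [← this, ← hk''] at hw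
        exact absurd (hinj (r + 1) le_rfl (r - 1) (by omega) hw) (by omega)
      · omega

lemma three_nbrs {z w1 w2 w3 : V ⊕ (V × V × Fin r)}
    (h1 : (subdiv r G).Adj w1 z) (h2 : (subdiv r G).Adj w2 z) (h3 : (subdiv r G).Adj w3 z)
    (d12 : w1 ≠ w2) (d13 : w1 ≠ w3) (d23 : w2 ≠ w3) : ∃ v, z = inl v := by
  match z with
  | inl v => exact ⟨v, rfl⟩
  | inr (x, y, k) =>
    exfalso
    -- classify each neighbor as "low" or "high"
    have cls : ∀ w, (subdiv r G).Adj w (inr (x, y, k)) →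
        ((w = inl x ∧ (k : ℕ) = 0) ∨ (∃ k' : Fin r, w = inr (x, y, k') ∧ (k : ℕ) = k' + 1)) ∨
        ((w = inl y ∧ (k : ℕ) = r - 1) ∨ (∃ k' : Fin r, w = inr (x, y, k') ∧ (k' : ℕ) = k + 1)) := by
      intro w hw
      rcases subdiv_adj_inr hw with h | h | ⟨k', hk', h | h⟩
      · exact Or.inl (Or.inl h)
      · exact Or.inr (Or.inl h)
      · exact Or.inr (Or.inr ⟨k', hk', h⟩)
      · exact Or.inl (Or.inr ⟨k', hk', h⟩)
    have low_eq : ∀ w w', ((w = inl x ∧ (k : ℕ) = 0) ∨ (∃ k' : Fin r, w = inr (x, y, k') ∧ (k : ℕ) = k' + 1)) →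
        ((w' = inl x ∧ (k : ℕ) = 0) ∨ (∃ k' : Fin r, w' = inr (x, y, k') ∧ (k : ℕ) = k' + 1)) → w = w' := by
      rintro w w' (⟨rfl, hk⟩ | ⟨a, rfl, ha⟩) (⟨rfl, hk'⟩ | ⟨b, rfl, hb⟩)
      · rfl
      · omega
      · omega
      · have : a = b := Fin.ext (by omega)
        rw [this]
    have high_eq : ∀ w w', ((w = inl y ∧ (k : ℕ) = r - 1) ∨ (∃ k' : Fin r, w = inr (x, y, k') ∧ (k' : ℕ) = k + 1)) →
        ((w' = inl y ∧ (k : ℕ) = r - 1) ∨ (∃ k' : Fin r, w' = inr (x, y, k') ∧ (k' : ℕ) = k + 1)) → w = w' := by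
      rintro w w' (⟨rfl, hk⟩ | ⟨a, rfl, ha⟩) (⟨rfl, hk'⟩ | ⟨b, rfl, hb⟩)
      · rfl
      · have := b.isLt; omega
      · have := a.isLt; omega
      · have : a = b := Fin.ext (by omega)
        rw [this]
    rcases cls w1 h1 with c1 | c1 <;> rcases cls w2 h2 with c2 | c2 <;> rcases cls w3 h3 with c3 | c3
    · exact d12 (low_eq _ _ c1 c2)
    · exact d12 (low_eq _ _ c1 c2)
    · exact d13 (low_eq _ _ c1 c3)
    · exact d23 (high_eq _ _ c2 c3)
    · exact d23 (low_eq _ _ c2 c3)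
    · exact d13 (high_eq _ _ c1 c3)
    · exact d12 (high_eq _ _ c1 c2)
    · exact d12 (high_eq _ _ c1 c2)

lemma fwd (hr : 1 ≤ r) {m : ℕ} (f : Fin m → V) (hf : Function.Injective f)
    (hadjf : ∀ a b : Fin m, a ≠ b → G.Adj (f a) (f b)) :
    Contains (subdiv r (⊤ : SimpleGraph (Fin m))) (subdiv r G) := by
  have hflt : ∀ {a b : Fin m}, a ≠ b → ¬ f a < f b → f b < f a := fun hab h =>
    lt_of_le_of_ne (not_lt.mp h) (fun e => hab (hf e.symm))
  classical
  set Fi : Fin m × Fin m × Fin r → V × V × Fin r := fun t =>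
    if t.1 < t.2.1 then
      if f t.1 < f t.2.1 then (f t.1, f t.2.1, t.2.2)
      else (f t.2.1, f t.1, ⟨r - 1 - (t.2.2 : ℕ), by have := t.2.2.isLt; omega⟩)
    else (max (f t.1) (f t.2.1), min (f t.1) (f t.2.1), t.2.2) with hFi
  refine ⟨Sum.map f Fi, hf.sumMap ?_, ?_⟩
  · -- injectivity of Fi
    rintro ⟨a, b, i⟩ ⟨a', b', i'⟩ h
    simp only [hFi] at h
    have hiw := i.isLt
    have hiw' := i'.isLt
    by_cases p1 : a < b <;> by_cases p2 : a' < b'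
    · rw [if_pos p1, if_pos p2] at h
      by_cases q1 : f a < f b <;> by_cases q2 : f a' < f b'
      · rw [if_pos q1, if_pos q2] at h
        simp only [Prod.mk.injEq] at h
        obtain ⟨e1, e2, e3⟩ := h
        rw [hf e1, hf e2, e3]
      · rw [if_pos q1, if_neg q2] at h
        simp only [Prod.mk.injEq] at h
        obtain ⟨e1, e2, -⟩ := h
        rw [← hf e2, ← hf e1] at p2
        exact absurd p1 (asymm p2)
      · rw [if_neg q1, if_pos q2] at h
        simp only [Prod.mk.injEq] at h
        obtain ⟨e1, e2, -⟩ := h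
        rw [← hf e1, ← hf e2] at p2
        exact absurd p1 (asymm p2)
      · rw [if_neg q1, if_neg q2] at h
        simp only [Prod.mk.injEq, Fin.mk.injEq] at h
        obtain ⟨e1, e2, e3⟩ := h
        have : i = i' := Fin.ext (by omega)
        rw [hf e1, hf e2, this]
    · rw [if_pos p1, if_neg p2] at h
      exfalso
      by_cases q1 : f a < f b
      · rw [if_pos q1] at h
        simp only [Prod.mk.injEq] at h
        obtain ⟨e1, e2, -⟩ := h
        rw [e1, e2] at q1
        exact absurd q1 (not_lt.mpr min_le_max)
      · rw [if_neg q1] at h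
        simp only [Prod.mk.injEq] at h
        obtain ⟨e1, e2, -⟩ := h
        have q1' : f b < f a := hflt (Fin.ne_of_lt p1) q1
        rw [e1, e2] at q1'
        exact absurd q1' (not_lt.mpr min_le_max)
    · rw [if_neg p1, if_pos p2] at h
      exfalso
      by_cases q2 : f a' < f b'
      · rw [if_pos q2] at h
        simp only [Prod.mk.injEq] at h
        obtain ⟨e1, e2, -⟩ := h
        rw [← e1, ← e2] at q2
        exact absurd q2 (not_lt.mpr min_le_max)
      · rw [if_neg q2] at h
        simp only [Prod.mk.injEq] at h
        obtain ⟨e1, e2, -⟩ := h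
        have q2' : f b' < f a' := hflt (Fin.ne_of_lt p2) q2
        rw [← e1, ← e2] at q2'
        exact absurd q2' (not_lt.mpr min_le_max)
    · rw [if_neg p1, if_neg p2] at h
      simp only [Prod.mk.injEq] at h
      obtain ⟨e1, e2, e3⟩ := h
      have hmm : (f a = f a' ∧ f b = f b') ∨ (f a = f b' ∧ f b = f a') := by
        rcases le_total (f a) (f b) with t1 | t1 <;> rcases le_total (f a') (f b') with t2 | t2
        · rw [max_eq_right t1, max_eq_right t2] at e1
          rw [min_eq_left t1, min_eq_left t2] at e2
          exact Or.inl ⟨e2, e1⟩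
        · rw [max_eq_right t1, max_eq_left t2] at e1
          rw [min_eq_left t1, min_eq_right t2] at e2
          exact Or.inr ⟨e2, e1⟩
        · rw [max_eq_left t1, max_eq_right t2] at e1
          rw [min_eq_right t1, min_eq_left t2] at e2
          exact Or.inr ⟨e1, e2⟩
        · rw [max_eq_left t1, max_eq_left t2] at e1
          rw [min_eq_right t1, min_eq_right t2] at e2
          exact Or.inl ⟨e1, e2⟩
      rcases hmm with ⟨e4, e5⟩ | ⟨e4, e5⟩
      · rw [hf e4, hf e5, e3]
      · have ea : a = b' := hf e4
        have eb : b = a' := hf e5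
        have hab : a = b := le_antisymm (by rw [ea, eb]; exact not_lt.mp p2) (not_lt.mp p1)
        have h1 : a = a' := by rw [hab, eb]
        have h2 : b = b' := by rw [← hab, ea]
        rw [h1, h2, e3]
  · -- adjacency preservation
    have main1 : ∀ (u : Fin m) (a b : Fin m) (i : Fin r),
        (subdiv r (⊤ : SimpleGraph (Fin m))).Adj (inl u) (inr (a, b, i)) →
        (subdiv r G).Adj (Sum.map f Fi (inl u)) (Sum.map f Fi (inr (a, b, i))) := by
      intro u a b i h
      rw [subdiv_adj_inl_inr] at h
      obtain ⟨hab, hlt, hd⟩ := h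
      have hne : a ≠ b := Fin.ne_of_lt hlt
      have hiw := i.isLt
      simp only [Sum.map_inl, Sum.map_inr, hFi]
      rw [if_pos hlt]
      by_cases hv : f a < f b
      · rw [if_pos hv, subdiv_adj_inl_inr]
        refine ⟨hadjf a b hne, hv, ?_⟩
        rcases hd with ⟨rfl, h0⟩ | ⟨rfl, h0⟩
        · exact Or.inl ⟨rfl, h0⟩
        · exact Or.inr ⟨rfl, h0⟩
      · rw [if_neg hv, subdiv_adj_inl_inr]
        refine ⟨hadjf b a hne.symm, hflt hne hv, ?_⟩
        rcases hd with ⟨rfl, h0⟩ | ⟨rfl, h0⟩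
        · exact Or.inr ⟨rfl, by simp only [Fin.val_mk]; omega⟩
        · exact Or.inl ⟨rfl, by simp only [Fin.val_mk]; omega⟩
    have main2 : ∀ (a b : Fin m) (i : Fin r) (a' b' : Fin m) (j : Fin r),
        (subdiv r (⊤ : SimpleGraph (Fin m))).Adj (inr (a, b, i)) (inr (a', b', j)) →
        (subdiv r G).Adj (Sum.map f Fi (inr (a, b, i))) (Sum.map f Fi (inr (a', b', j))) := by
      intro a b i a' b' j h
      rw [subdiv_adj_inr_inr] at h
      obtain ⟨rfl, rfl, hab, hlt, hd⟩ := h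
      have hne : a ≠ b := Fin.ne_of_lt hlt
      have hiw := i.isLt
      have hjw := j.isLt
      simp only [Sum.map_inr, hFi]
      rw [if_pos hlt, if_pos hlt]
      by_cases hv : f a < f b
      · rw [if_pos hv, if_pos hv, subdiv_adj_inr_inr]
        exact ⟨rfl, rfl, hadjf a b hne, hv, hd⟩
      · rw [if_neg hv, if_neg hv, subdiv_adj_inr_inr]
        refine ⟨rfl, rfl, hadjf b a hne.symm, hflt hne hv, ?_⟩
        simp only [Fin.val_mk]
        omega
    rintro (u | ⟨a, b, i⟩) (v | ⟨a', b', j⟩) h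
    · exact absurd h subdiv_adj_inl_inl
    · exact main1 u a' b' j h
    · exact (main1 v a b i h.symm).symm
    · exact main2 a b i a' b' j h

end Lemmas

def tri {r : ℕ} (hr : 1 ≤ r) (t : ℕ) : Fin 3 ⊕ (Fin 3 × Fin 3 × Fin r) :=
  if h : t % (r + 1) = 0 then inl ⟨t / (r + 1) % 3, Nat.mod_lt _ (by omega)⟩
  else if t / (r + 1) % 3 = 0 then
    inr (0, 1, ⟨t % (r + 1) - 1, by have := Nat.mod_lt t (show 0 < r + 1 by omega); omega⟩)
  else if t / (r + 1) % 3 = 1 then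
    inr (1, 2, ⟨t % (r + 1) - 1, by have := Nat.mod_lt t (show 0 < r + 1 by omega); omega⟩)
  else
    inr (0, 2, ⟨r - t % (r + 1), by omega⟩)

lemma tri_eq0 {r : ℕ} (hr : 1 ≤ r) {t : ℕ} (h : t % (r + 1) = 0) :
    tri hr t = inl ⟨t / (r + 1) % 3, Nat.mod_lt _ (by omega)⟩ := by simp [tri, h]

lemma tri_eqA {r : ℕ} (hr : 1 ≤ r) {t : ℕ} (h : t % (r + 1) ≠ 0) (h2 : t / (r + 1) % 3 = 0) :
    tri hr t = inr (0, 1, ⟨t % (r + 1) - 1,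
      by have := Nat.mod_lt t (show 0 < r + 1 by omega); omega⟩) := by simp [tri, h, h2]

lemma tri_eqB {r : ℕ} (hr : 1 ≤ r) {t : ℕ} (h : t % (r + 1) ≠ 0) (h2 : t / (r + 1) % 3 = 1) :
    tri hr t = inr (1, 2, ⟨t % (r + 1) - 1,
      by have := Nat.mod_lt t (show 0 < r + 1 by omega); omega⟩) := by simp [tri, h, h2]

lemma tri_eqC {r : ℕ} (hr : 1 ≤ r) {t : ℕ} (h : t % (r + 1) ≠ 0) (h2 : t / (r + 1) % 3 = 2) :
    tri hr t = inr (0, 2, ⟨r - t % (r + 1), by omega⟩) := by simp [tri, h, h2]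

lemma tri_adj {r : ℕ} (hr : 1 ≤ r) (t : ℕ) :
    (subdiv r (⊤ : SimpleGraph (Fin 3))).Adj (tri hr t) (tri hr (t + 1)) := by
  have hdm := Nat.div_add_mod t (r + 1)
  set s := t % (r + 1) with hs
  set d := t / (r + 1) with hd
  have hslt : s < r + 1 := Nat.mod_lt _ (by omega)
  have hq : d % 3 = 0 ∨ d % 3 = 1 ∨ d % 3 = 2 := by omega
  rcases Nat.lt_or_ge s r with hsr | hsr
  · -- s < r : next is (s+1, d)
    have ht1 : t + 1 = (r + 1) * d + (s + 1) := by omega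
    have h1 : (t + 1) % (r + 1) = s + 1 := by
      rw [ht1, Nat.mul_add_mod, Nat.mod_eq_of_lt (by omega)]
    have h2 : (t + 1) / (r + 1) = d := by
      rw [ht1, Nat.mul_add_div (by omega), Nat.div_eq_of_lt (by omega)]
      omega
    by_cases hs0 : s = 0
    · rw [tri_eq0 hr (by omega)]
      rcases hq with hq | hq | hq
      · rw [tri_eqA hr (by omega) (by omega), subdiv_adj_inl_inr]
        refine ⟨by decide, by decide, Or.inl ⟨Fin.ext ?_, ?_⟩⟩ <;> first | (simp; omega) | simp | omega
      · rw [tri_eqB hr (by omega) (by omega), subdiv_adj_inl_inr]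
        refine ⟨by decide, by decide, Or.inl ⟨Fin.ext ?_, ?_⟩⟩ <;> first | (simp; omega) | simp | omega
      · rw [tri_eqC hr (by omega) (by omega), subdiv_adj_inl_inr]
        refine ⟨by decide, by decide, Or.inr ⟨Fin.ext ?_, ?_⟩⟩ <;> first | (simp; omega) | simp | omega
    · rcases hq with hq | hq | hq
      · rw [tri_eqA hr (by omega) (by omega), tri_eqA hr (by omega) (by omega),
          subdiv_adj_inr_inr]
        refine ⟨rfl, rfl, by decide, by decide, ?_⟩; first | (simp; omega) | simp | omega
      · rw [tri_eqB hr (by omega) (by omega), tri_eqB hr (by omega) (by omega),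
          subdiv_adj_inr_inr]
        refine ⟨rfl, rfl, by decide, by decide, ?_⟩; first | (simp; omega) | simp | omega
      · rw [tri_eqC hr (by omega) (by omega), tri_eqC hr (by omega) (by omega),
          subdiv_adj_inr_inr]
        refine ⟨rfl, rfl, by decide, by decide, ?_⟩; first | (simp; omega) | simp | omega
  · -- s = r : next is (0, d+1)
    have hsr' : s = r := by omega
    have ht1 : t + 1 = (r + 1) * (d + 1) := by rw [Nat.mul_succ]; omega
    have h1 : (t + 1) % (r + 1) = 0 := by rw [ht1, Nat.mul_mod_right]
    have h2 : (t + 1) / (r + 1) = d + 1 := by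
      rw [ht1, Nat.mul_div_cancel_left _ (by omega)]
    rw [tri_eq0 hr h1]
    rcases hq with hq | hq | hq
    · rw [tri_eqA hr (by omega) (by omega)]
      refine ((subdiv_adj_inl_inr).mpr
        ⟨by decide, by decide, Or.inr ⟨Fin.ext ?_, ?_⟩⟩).symm <;> first | (simp; omega) | simp | omega
    · rw [tri_eqB hr (by omega) (by omega)]
      refine ((subdiv_adj_inl_inr).mpr
        ⟨by decide, by decide, Or.inr ⟨Fin.ext ?_, ?_⟩⟩).symm <;> first | (simp; omega) | simp | omega
    · rw [tri_eqC hr (by omega) (by omega)]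
      refine ((subdiv_adj_inl_inr).mpr
        ⟨by decide, by decide, Or.inl ⟨Fin.ext ?_, ?_⟩⟩).symm <;> first | (simp; omega) | simp | omega

lemma tri_mod {r : ℕ} (hr : 1 ≤ r) (t : ℕ) : tri hr t = tri hr (t % (3 * (r + 1))) := by
  have e1 : t % (3 * (r + 1)) % (r + 1) = t % (r + 1) :=
    Nat.mod_mod_of_dvd _ ⟨3, by ring⟩
  have e2 : t % (3 * (r + 1)) / (r + 1) % 3 = t / (r + 1) % 3 := by
    conv_rhs => rw [← Nat.div_add_mod t (3 * (r + 1))]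
    rw [show 3 * (r + 1) * (t / (3 * (r + 1))) = (r + 1) * (3 * (t / (3 * (r + 1)))) by ring,
      Nat.mul_add_div (by omega), Nat.mul_add_mod]
  by_cases h0 : t % (r + 1) = 0
  · rw [tri_eq0 hr h0, tri_eq0 hr (by omega)]
    exact congrArg _ (Fin.ext (by simp [e2]))
  · have hq : t / (r + 1) % 3 = 0 ∨ t / (r + 1) % 3 = 1 ∨ t / (r + 1) % 3 = 2 := by omega
    rcases hq with hq | hq | hq
    · rw [tri_eqA hr h0 hq, tri_eqA hr (by omega) (by omega)]
      exact congrArg _ (by simp [Prod.ext_iff, Fin.ext_iff, e1])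
    · rw [tri_eqB hr h0 hq, tri_eqB hr (by omega) (by omega)]
      exact congrArg _ (by simp [Prod.ext_iff, Fin.ext_iff, e1])
    · rw [tri_eqC hr h0 hq, tri_eqC hr (by omega) (by omega)]
      exact congrArg _ (by simp [Prod.ext_iff, Fin.ext_iff, e1])

lemma tri_inj {r : ℕ} (hr : 1 ≤ r) {t t' : ℕ} (h1 : t < 3 * (r + 1)) (h2 : t' < 3 * (r + 1))
    (h : tri hr t = tri hr t') : t = t' := by
  have hdm := Nat.div_add_mod t (r + 1)
  have hdm' := Nat.div_add_mod t' (r + 1)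
  set s := t % (r + 1) with hs
  set d := t / (r + 1) with hd
  set s' := t' % (r + 1) with hs'
  set d' := t' / (r + 1) with hd'
  have hslt : s < r + 1 := Nat.mod_lt _ (by omega)
  have hslt' : s' < r + 1 := Nat.mod_lt _ (by omega)
  have hdlt : d < 3 := by rw [hd, Nat.div_lt_iff_lt_mul (by omega)]; omega
  have hdlt' : d' < 3 := by rw [hd', Nat.div_lt_iff_lt_mul (by omega)]; omega
  have hq : d % 3 = d := Nat.mod_eq_of_lt hdlt
  have hq' : d' % 3 = d' := Nat.mod_eq_of_lt hdlt'
  have key : s = s' ∧ d = d' := by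
    have hq3 : d % 3 = 0 ∨ d % 3 = 1 ∨ d % 3 = 2 := by omega
    have hq3' : d' % 3 = 0 ∨ d' % 3 = 1 ∨ d' % 3 = 2 := by omega
    by_cases e0 : s = 0 <;> by_cases e0' : s' = 0
    · rw [tri_eq0 hr (by omega), tri_eq0 hr (by omega)] at h
      simp only [inl.injEq, Fin.mk.injEq] at h
      omega
    · rcases hq3' with hv' | hv' | hv'
      · rw [tri_eq0 hr (by omega), tri_eqA hr (by omega) (by omega)] at h; simp at h
      · rw [tri_eq0 hr (by omega), tri_eqB hr (by omega) (by omega)] at h; simp at h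
      · rw [tri_eq0 hr (by omega), tri_eqC hr (by omega) (by omega)] at h; simp at h
    · rcases hq3 with hv | hv | hv
      · rw [tri_eqA hr (by omega) (by omega), tri_eq0 hr (by omega)] at h; simp at h
      · rw [tri_eqB hr (by omega) (by omega), tri_eq0 hr (by omega)] at h; simp at h
      · rw [tri_eqC hr (by omega) (by omega), tri_eq0 hr (by omega)] at h; simp at h
    · rcases hq3 with hv | hv | hv <;> rcases hq3' with hv' | hv' | hv'
      · rw [tri_eqA hr (by omega) (by omega), tri_eqA hr (by omega) (by omega)] at h
        simp only [inr.injEq, Prod.mk.injEq, Fin.mk.injEq] at h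
        omega
      · rw [tri_eqA hr (by omega) (by omega), tri_eqB hr (by omega) (by omega)] at h
        simp only [inr.injEq, Prod.mk.injEq, Fin.mk.injEq] at h
        exact absurd h.1 (by decide)
      · rw [tri_eqA hr (by omega) (by omega), tri_eqC hr (by omega) (by omega)] at h
        simp only [inr.injEq, Prod.mk.injEq, Fin.mk.injEq] at h
        exact absurd h.2.1 (by decide)
      · rw [tri_eqB hr (by omega) (by omega), tri_eqA hr (by omega) (by omega)] at h
        simp only [inr.injEq, Prod.mk.injEq, Fin.mk.injEq] at h
        exact absurd h.1 (by decide)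
      · rw [tri_eqB hr (by omega) (by omega), tri_eqB hr (by omega) (by omega)] at h
        simp only [inr.injEq, Prod.mk.injEq, Fin.mk.injEq] at h
        omega
      · rw [tri_eqB hr (by omega) (by omega), tri_eqC hr (by omega) (by omega)] at h
        simp only [inr.injEq, Prod.mk.injEq, Fin.mk.injEq] at h
        exact absurd h.1 (by decide)
      · rw [tri_eqC hr (by omega) (by omega), tri_eqA hr (by omega) (by omega)] at h
        simp only [inr.injEq, Prod.mk.injEq, Fin.mk.injEq] at h
        exact absurd h.2.1 (by decide)
      · rw [tri_eqC hr (by omega) (by omega), tri_eqB hr (by omega) (by omega)] at h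
        simp only [inr.injEq, Prod.mk.injEq, Fin.mk.injEq] at h
        exact absurd h.1 (by decide)
      · rw [tri_eqC hr (by omega) (by omega), tri_eqC hr (by omega) (by omega)] at h
        simp only [inr.injEq, Prod.mk.injEq, Fin.mk.injEq] at h
        omega
  obtain ⟨k1, k2⟩ := key
  rw [← k1, ← k2] at hdm'
  omega

section Backward
variable {V : Type*} [LinearOrder V] {G : SimpleGraph V} {r : ℕ}

lemma bwd_big (hr : 1 ≤ r) {m : ℕ} (hm : 4 ≤ m)
    (Φ : (Fin m ⊕ (Fin m × Fin m × Fin r)) → (V ⊕ (V × V × Fin r)))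
    (hΦi : Function.Injective Φ)
    (hΦa : ∀ a b, (subdiv r (⊤ : SimpleGraph (Fin m))).Adj a b → (subdiv r G).Adj (Φ a) (Φ b)) :
    Contains (⊤ : SimpleGraph (Fin m)) G := by
  classical
  have hbr : ∀ a : Fin m, ∃ va, Φ (inl a) = inl va := by
    intro a
    obtain ⟨b, hb⟩ : ∃ b : Fin m, (b : ℕ) = if (a : ℕ) = 0 then 1 else 0 := by
      refine ⟨⟨if (a : ℕ) = 0 then 1 else 0, ?_⟩, rfl⟩
      split_ifs <;> omega
    obtain ⟨c, hc⟩ : ∃ c : Fin m, (c : ℕ) = if (a : ℕ) ≤ 1 then 2 else 1 := by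
      refine ⟨⟨if (a : ℕ) ≤ 1 then 2 else 1, ?_⟩, rfl⟩
      split_ifs <;> omega
    obtain ⟨d, hd⟩ : ∃ d : Fin m, (d : ℕ) = if (a : ℕ) ≤ 2 then 3 else 2 := by
      refine ⟨⟨if (a : ℕ) ≤ 2 then 3 else 2, ?_⟩, rfl⟩
      split_ifs <;> omega
    have nab : a ≠ b := Fin.ne_of_val_ne (by split_ifs at hb <;> omega)
    have nac : a ≠ c := Fin.ne_of_val_ne (by split_ifs at hc <;> omega)
    have nad : a ≠ d := Fin.ne_of_val_ne (by split_ifs at hd <;> omega)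
    have nbc : b ≠ c := Fin.ne_of_val_ne (by split_ifs at hb hc <;> omega)
    have nbd : b ≠ d := Fin.ne_of_val_ne (by split_ifs at hb hd <;> omega)
    have ncd : c ≠ d := Fin.ne_of_val_ne (by split_ifs at hc hd <;> omega)
    set nbr : Fin m → (Fin m ⊕ (Fin m × Fin m × Fin r)) := fun e =>
      if a < e then inr (a, e, (⟨0, by omega⟩ : Fin r))
      else inr (e, a, (⟨r - 1, by omega⟩ : Fin r)) with hnbr
    have hadj_nbr : ∀ e, a ≠ e → (subdiv r (⊤ : SimpleGraph (Fin m))).Adj (nbr e) (inl a) := by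
      intro e hae
      simp only [hnbr]
      by_cases hlt : a < e
      · rw [if_pos hlt]
        exact ((subdiv_adj_inl_inr).mpr
          ⟨(SimpleGraph.top_adj _ _).mpr hae, hlt, Or.inl ⟨rfl, rfl⟩⟩).symm
      · have hlt' : e < a := lt_of_le_of_ne (not_lt.mp hlt) (fun h => hae h.symm)
        rw [if_neg hlt]
        exact ((subdiv_adj_inl_inr).mpr
          ⟨(SimpleGraph.top_adj _ _).mpr (fun h => hae h.symm), hlt', Or.inr ⟨rfl, rfl⟩⟩).symm
    have hne_nbr : ∀ e e', e ≠ e' → a ≠ e → a ≠ e' → nbr e ≠ nbr e' := by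
      intro e e' hee hae hae'
      simp only [hnbr]
      by_cases h1 : a < e <;> by_cases h2 : a < e' <;>
        simp only [if_pos, if_neg, h1, h2, reduceIte, ne_eq, inr.injEq, Prod.mk.injEq,
          not_and]
      · intro _ h _; exact hee h
      · intro h; exact absurd h.symm hae'.symm
      · intro h; exact absurd h hae.symm
      · intro h _; exact hee h
    obtain ⟨va, hva⟩ := three_nbrs (hΦa _ _ (hadj_nbr b nab)) (hΦa _ _ (hadj_nbr c nac))
      (hΦa _ _ (hadj_nbr d nad))
      (fun h => hne_nbr b c nbc nab nac (hΦi h))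
      (fun h => hne_nbr b d nbd nab nad (hΦi h))
      (fun h => hne_nbr c d ncd nac nad (hΦi h))
    exact ⟨va, hva⟩
  choose g hg using hbr
  have hGadj : ∀ a b : Fin m, a < b → G.Adj (g a) (g b) := by
    intro a b hab
    classical
    set p : ℕ → (Fin m ⊕ (Fin m × Fin m × Fin r)) := fun j =>
      if j = 0 then inl a
      else if h : j ≤ r then inr (a, b, ⟨j - 1, by omega⟩)
      else inl b with hp
    have hp0 : p 0 = inl a := by simp [hp]
    have hpmid : ∀ j (h1 : 1 ≤ j) (h2 : j ≤ r), p j = inr (a, b, ⟨j - 1, by omega⟩) := by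
      intro j h1 h2
      simp only [hp]
      rw [if_neg (by omega : ¬ j = 0), dif_pos h2]
    have hplast : p (r + 1) = inl b := by
      simp only [hp]
      rw [if_neg (by omega : ¬ r + 1 = 0), dif_neg (by omega : ¬ r + 1 ≤ r)]
    have hpadj : ∀ i < r + 1, (subdiv r (⊤ : SimpleGraph (Fin m))).Adj (p i) (p (i + 1)) := by
      intro i hi
      have hne : a ≠ b := Fin.ne_of_lt hab
      by_cases h0 : i = 0
      · subst h0
        rw [hp0, hpmid 1 le_rfl hr]
        exact (subdiv_adj_inl_inr).mpr ⟨(SimpleGraph.top_adj _ _).mpr hne, hab, Or.inl ⟨rfl, rfl⟩⟩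
      · by_cases hlast : i = r
        · rw [hlast, hplast, hpmid r (by omega) le_rfl]
          exact ((subdiv_adj_inl_inr).mpr
            ⟨(SimpleGraph.top_adj _ _).mpr hne, hab, Or.inr ⟨rfl, rfl⟩⟩).symm
        · rw [hpmid i (by omega) (by omega), hpmid (i + 1) (by omega) (by omega),
            subdiv_adj_inr_inr]
          exact ⟨rfl, rfl, (SimpleGraph.top_adj _ _).mpr hne, hab, by simp; omega⟩
    have hpinj : ∀ i ≤ r + 1, ∀ j ≤ r + 1, p i = p j → i = j := by
      intro i hi j hj h
      by_cases h0 : i = 0 <;> by_cases h0' : j = 0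
      · omega
      · exfalso
        subst h0
        by_cases hrj : j ≤ r
        · rw [hp0, hpmid j (by omega) hrj] at h; exact absurd h (by simp)
        · have : j = r + 1 := by omega
          subst this
          rw [hp0, hplast] at h
          simp only [inl.injEq] at h
          exact absurd h (Fin.ne_of_lt hab)
      · exfalso
        subst h0'
        by_cases hri : i ≤ r
        · rw [hp0, hpmid i (by omega) hri] at h; exact absurd h.symm (by simp)
        · have : i = r + 1 := by omega
          subst this
          rw [hp0, hplast] at h
          simp only [inl.injEq] at h
          exact absurd h.symm (Fin.ne_of_lt hab)
      · by_cases hri : i ≤ r <;> by_cases hrj : j ≤ r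
        · rw [hpmid i (by omega) hri, hpmid j (by omega) hrj] at h
          simp only [inr.injEq, Prod.mk.injEq, Fin.mk.injEq] at h
          omega
        · have : j = r + 1 := by omega
          subst this
          rw [hpmid i (by omega) hri, hplast] at h
          exact absurd h (by simp)
        · have : i = r + 1 := by omega
          subst this
          rw [hpmid j (by omega) hrj, hplast] at h
          exact absurd h.symm (by simp)
        · omega
    obtain ⟨u', hu', hadj'⟩ := unwind (G := G) hr
      (w := fun j => Φ (p j))
      (fun i hi => hΦa _ _ (hpadj i hi))
      (fun i hi j hj hh => hpinj i hi j hj (hΦi hh))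
      (u := g a) (by show Φ (p 0) = inl (g a); rw [hp0, hg a])
    have : Φ (p (r + 1)) = inl (g b) := by rw [hplast, hg b]
    rw [this] at hu'
    simp only [inl.injEq] at hu'
    rw [hu']
    exact hadj'
  refine ⟨g, ?_, ?_⟩
  · intro a b h
    by_contra hne
    rcases lt_or_gt_of_ne hne with hl | hl
    · exact (hGadj a b hl).ne h
    · exact (hGadj b a hl).ne h.symm
  · intro a b hab
    rw [SimpleGraph.top_adj] at hab
    rcases lt_or_gt_of_ne hab with hl | hl
    · exact hGadj a b hl
    · exact (hGadj b a hl).symm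

end Backward

section Back3
variable {V : Type*} [LinearOrder V] {G : SimpleGraph V} {r : ℕ}

lemma bwd_three (hr : 1 ≤ r)
    (Φ : (Fin 3 ⊕ (Fin 3 × Fin 3 × Fin r)) → (V ⊕ (V × V × Fin r)))
    (hΦi : Function.Injective Φ)
    (hΦa : ∀ a b, (subdiv r (⊤ : SimpleGraph (Fin 3))).Adj a b → (subdiv r G).Adj (Φ a) (Φ b)) :
    Contains (⊤ : SimpleGraph (Fin 3)) G := by
  classical
  set n := 3 * (r + 1) with hn
  set v : ℕ → (V ⊕ (V × V × Fin r)) := fun t => Φ (tri hr t) with hv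
  have vadj : ∀ t, (subdiv r G).Adj (v t) (v (t + 1)) := fun t => hΦa _ _ (tri_adj hr t)
  have vmodinj : ∀ t t', v t = v t' → t % n = t' % n := by
    intro t t' h
    have h2 : tri hr t = tri hr t' := hΦi h
    rw [tri_mod hr t, tri_mod hr t'] at h2
    exact tri_inj hr (Nat.mod_lt _ (by omega)) (Nat.mod_lt _ (by omega)) h2
  have vper : ∀ t, v (t + (r + 1) + (r + 1) + (r + 1)) = v t := by
    intro t
    have e : t + (r + 1) + (r + 1) + (r + 1) = t + n := by omega
    rw [hv]
    refine congrArg Φ ?_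
    rw [e, tri_mod hr (t + n), tri_mod hr t, Nat.add_mod_right]
  -- find a branch vertex on the cycle
  have hbranch : ∃ t u, v t = inl u := by
    by_contra hno
    push_neg at hno
    obtain ⟨x, y, k0, h0⟩ : ∃ x y k, v 0 = inr (x, y, k) := by
      cases h00 : v 0 with
      | inl u => exact absurd h00 (hno 0 u)
      | inr q => obtain ⟨x, y, k⟩ := q; exact ⟨x, y, k, rfl⟩
    have chain : ∀ t, ∃ k : Fin r, v t = inr (x, y, k) := by
      intro t
      induction t with
      | zero => exact ⟨k0, h0⟩
      | succ t ih =>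
        obtain ⟨k, hk⟩ := ih
        have hadj := vadj t
        rw [hk] at hadj
        cases hvt : v (t + 1) with
        | inl u => exact absurd hvt (hno _ u)
        | inr q =>
          obtain ⟨a, b, j⟩ := q
          rw [hvt, subdiv_adj_inr_inr] at hadj
          exact ⟨j, by rw [hadj.1, hadj.2.1]⟩
    have hginj : Function.Injective (fun t : Fin (r + 1) => Classical.choose (chain (t : ℕ))) := by
      intro t t' h
      have ht := Classical.choose_spec (chain (t : ℕ))
      have ht' := Classical.choose_spec (chain (t' : ℕ))
      have hvv : v (t : ℕ) = v (t' : ℕ) := by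
        rw [ht, ht']
        simp only at h
        rw [h]
      have hmm := vmodinj _ _ hvv
      have b1 : (t : ℕ) < n := by have := t.isLt; omega
      have b2 : (t' : ℕ) < n := by have := t'.isLt; omega
      rw [Nat.mod_eq_of_lt b1, Nat.mod_eq_of_lt b2] at hmm
      exact Fin.ext hmm
    have hcard := Fintype.card_le_of_injective _ hginj
    simp only [Fintype.card_fin] at hcard
    omega
  obtain ⟨t0, u0, ht0⟩ := hbranch
  have seg : ∀ (t : ℕ) (u : V), v t = inl u →
      ∃ u', v (t + (r + 1)) = inl u' ∧ G.Adj u u' := by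
    intro t u hu
    refine unwind (G := G) hr (w := fun j => v (t + j)) ?_ ?_ ?_
    · intro i _
      exact vadj (t + i)
    · intro i hi j hj hh
      have hmm := vmodinj _ _ hh
      have hme : (i : ℕ) ≡ (j : ℕ) [MOD n] := Nat.ModEq.add_left_cancel' t hmm
      have b1 : i < n := by omega
      have b2 : j < n := by omega
      unfold Nat.ModEq at hme
      rw [Nat.mod_eq_of_lt b1, Nat.mod_eq_of_lt b2] at hme
      exact hme
    · exact hu
  obtain ⟨u1, h1, a01⟩ := seg t0 u0 ht0
  obtain ⟨u2, h2, a12⟩ := seg _ u1 h1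
  obtain ⟨u3, h3, a23⟩ := seg _ u2 h2
  rw [vper t0, ht0] at h3
  simp only [inl.injEq] at h3
  rw [← h3] at a23
  -- build the triangle map
  have n01 : u0 ≠ u1 := a01.ne
  have n12 : u1 ≠ u2 := a12.ne
  have n20 : u2 ≠ u0 := a23.ne
  refine ⟨fun a => if a = 0 then u0 else if a = 1 then u1 else u2, ?_, ?_⟩
  · intro a b h
    fin_cases a <;> fin_cases b <;> simp_all <;>
      first
        | rfl
        | (exact absurd h n01) | (exact absurd h.symm n01)
        | (exact absurd h n12) | (exact absurd h.symm n12)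
        | (exact absurd h.symm n20) | (exact absurd h n20)
  · intro a b hab
    rw [SimpleGraph.top_adj] at hab
    fin_cases a <;> fin_cases b <;> simp_all <;>
      first
        | (exact a01) | (exact a01.symm)
        | (exact a12) | (exact a12.symm)
        | (exact a23) | (exact a23.symm)

end Back3

/-- For `r ≥ 1`: a graph `G` contains `K_m` as a subgraph if and only if the
`r`-subdivision of `G` contains the `r`-subdivision of `K_m` as a subgraph. -/
theorem stmt18 {V : Type*} [LinearOrder V] (G : SimpleGraph V) (r m : ℕ) (hr : 1 ≤ r) :
    Contains (⊤ : SimpleGraph (Fin m)) G ↔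
      Contains (subdiv r (⊤ : SimpleGraph (Fin m))) (subdiv r G) := by
  constructor
  · rintro ⟨f, hf, hadj⟩
    exact fwd hr f hf (fun a b hab => hadj a b ((SimpleGraph.top_adj _ _).mpr hab))
  · rintro ⟨Φ, hΦi, hΦa⟩
    match m with
    | 0 => exact ⟨Fin.elim0, fun a => a.elim0, fun a => a.elim0⟩
    | 1 =>
      obtain ⟨v, -⟩ : ∃ v : V, True := by
        cases h0 : Φ (inl 0) with
        | inl v => exact ⟨v, trivial⟩
        | inr q => exact ⟨q.1, trivial⟩
      refine ⟨fun _ => v, fun a b _ => Subsingleton.elim a b, fun a b hab => ?_⟩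
      rw [SimpleGraph.top_adj] at hab
      exact absurd (Subsingleton.elim a b) hab
    | 2 =>
      have hedge : (subdiv r (⊤ : SimpleGraph (Fin 2))).Adj (inl 0) (inr (0, 1, ⟨0, by omega⟩)) := by
        rw [subdiv_adj_inl_inr]
        exact ⟨by decide, by decide, Or.inl ⟨rfl, rfl⟩⟩
      obtain ⟨x, y, hxy⟩ := subdiv_edge (hΦa _ _ hedge)
      refine ⟨fun a => if a = 0 then x else y, ?_, ?_⟩
      · intro a b h
        fin_cases a <;> fin_cases b <;> simp_all <;>
          first
            | rfl
            | (exact absurd h hxy.ne) | (exact absurd h.symm hxy.ne)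
      · intro a b hab
        rw [SimpleGraph.top_adj] at hab
        fin_cases a <;> fin_cases b <;> simp_all <;> first | (exact hxy) | (exact hxy.symm)
    | 3 => exact bwd_three hr Φ hΦi hΦa
    | (n + 4) => exact bwd_big hr (by omega) Φ hΦi hΦa
end
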